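/- Consider the ODE initial value problem (d/dU) t_CH(U) = (1/2) μ(t_CH(U), U), t_CH(0) = T_Shock, where μ(t,U) = (n(U)/c(U))(1 + t G(U)) with c/n and G C^2, G(0) = -δ* = -1/T_Shock, G'(0) = 0, G''(0) > 0, and c/n bounded in [c₀, 1] with c₀ > 0. Then on a sufficiently small interval [0, U_0] a unique C^3 solution exists, and it satisfies t_CH(U) = T_Shock + O_pos(1) U^3 and μ(t_CH(U), U) = O_pos(1) U^2; in particular t_CH'(0) = t_CH''(0) = 0 and t_CH'''(0) > 0. -/

import Mathlib

lemma aux_idw {n : ℕ} {f : ℝ → ℝ} {s : Set ℝ} (hs : UniqueDiffOn ℝ s)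
    (hf : ContDiff ℝ (n : ℕ) f) : ∀ x ∈ s, iteratedDerivWithin n f s x = iteratedDeriv n f x := by
  induction n with
  | zero => intro x hx; simp
  | succ n IH =>
    intro x hx
    rw [iteratedDerivWithin_succ]
    have h1 : Set.EqOn (iteratedDerivWithin n f s) (iteratedDeriv n f) s :=
      fun y hy => IH (hf.of_le (by exact_mod_cast Nat.le_succ n)) y hy
    rw [derivWithin_congr h1 (h1 hx)]
    have hdiff : DifferentiableAt ℝ (iteratedDeriv n f) x :=
      (hf.differentiable_iteratedDeriv n (by exact_mod_cast Nat.lt_succ_self n)).differentiableAt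
    rw [hdiff.hasDerivAt.hasDerivWithinAt.derivWithin (hs x hx), ← iteratedDeriv_succ]

lemma aux_mono {u : ℝ → ℝ} {b : ℝ} (hu : Differentiable ℝ u)
    (h : ∀ x ∈ Set.Ioo (0:ℝ) b, 0 ≤ deriv u x) : ∀ x ∈ Set.Icc (0:ℝ) b, u 0 ≤ u x := by
  intro x hx
  have hmono : MonotoneOn u (Set.Icc (0:ℝ) b) := by
    apply monotoneOn_of_deriv_nonneg (convex_Icc _ _) hu.continuous.continuousOn
      hu.differentiableOn
    intro y hy; rw [interior_Icc] at hy; exact h y hy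
  exact hmono ⟨le_refl 0, hx.1.trans hx.2⟩ hx hx.1

lemma aux_cmp {v w : ℝ → ℝ} {b : ℝ} (hv : Differentiable ℝ v) (hw : Differentiable ℝ w)
    (h0 : v 0 ≤ w 0) (h : ∀ x ∈ Set.Ioo (0:ℝ) b, deriv v x ≤ deriv w x) :
    ∀ x ∈ Set.Icc (0:ℝ) b, v x ≤ w x := by
  intro x hx
  have h2 := aux_mono (u := fun y => w y - v y) (hw.sub hv) (fun y hy => by
    rw [deriv_fun_sub (hw.differentiableAt) (hv.differentiableAt)]
    have := h y hy; linarith) x hx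
  have h3 : w 0 - v 0 ≤ w x - v x := h2
  linarith

set_option maxHeartbeats 2000000 in
/-- the Cauchy horizon ODE `t_CH'(U) = (1/2) μ(t_CH(U), U)`,
`t_CH(0) = T_Shock`, with `μ(t,U) = (n/c)(U)(1 + t G(U))`, `G(0) = -δ* = -1/T_Shock`,
`G'(0) = 0`, `G''(0) > 0`, and `c/n ∈ [c₀,1]`, has a unique `C³` solution on a small
interval `[0,U₀]`, satisfying `t_CH(U) = T_Shock + O_pos(1) U³` and
`μ(t_CH(U),U) = O_pos(1) U²`; in particular `t_CH'(0) = t_CH''(0) = 0 < t_CH'''(0)`.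
Here `r = c/n`, so `μ(t,U) = (1 + t G(U)) / r(U)`. -/
theorem cauchy_horizon_ode_existence_uniqueness_asymptotics
    (T δ c₀ : ℝ) (hT : 0 < T) (hδ : δ = 1 / T) (hc₀ : 0 < c₀)
    (G r : ℝ → ℝ) (hG : ContDiff ℝ 2 G) (hr : ContDiff ℝ 2 r)
    (hG0 : G 0 = -δ) (hG1 : deriv G 0 = 0) (hG2 : 0 < iteratedDeriv 2 G 0)
    (hrbound : ∀ U : ℝ, c₀ ≤ r U ∧ r U ≤ 1) :
    let μ : ℝ → ℝ → ℝ := fun t U => (1 + t * G U) / r U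
    ∃ U₀ : ℝ, 0 < U₀ ∧ ∃ tCH : ℝ → ℝ,
      ContDiffOn ℝ 3 tCH (Set.Icc 0 U₀)
      ∧ tCH 0 = T
      ∧ (∀ U ∈ Set.Icc (0 : ℝ) U₀,
          HasDerivWithinAt tCH ((1 / 2) * μ (tCH U) U) (Set.Icc 0 U₀) U)
      ∧ (∀ s : ℝ → ℝ, s 0 = T →
          (∀ U ∈ Set.Icc (0 : ℝ) U₀,
            HasDerivWithinAt s ((1 / 2) * μ (s U) U) (Set.Icc 0 U₀) U) →
          ∀ U ∈ Set.Icc (0 : ℝ) U₀, s U = tCH U)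
      ∧ (∃ C₁ C₂ : ℝ, 0 < C₁ ∧ C₁ ≤ C₂ ∧ ∀ U ∈ Set.Icc (0 : ℝ) U₀,
          T + C₁ * U ^ 3 ≤ tCH U ∧ tCH U ≤ T + C₂ * U ^ 3
            ∧ C₁ * U ^ 2 ≤ μ (tCH U) U ∧ μ (tCH U) U ≤ C₂ * U ^ 2)
      ∧ iteratedDerivWithin 1 tCH (Set.Icc 0 U₀) 0 = 0
      ∧ iteratedDerivWithin 2 tCH (Set.Icc 0 U₀) 0 = 0
      ∧ 0 < iteratedDerivWithin 3 tCH (Set.Icc 0 U₀) 0 := by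
  intro μ
  have hμ : ∀ t U, μ t U = (1 + t * G U) / r U := fun t U => rfl
  have hT' : T ≠ 0 := ne_of_gt hT
  have hrpos : ∀ U, 0 < r U := fun U => lt_of_lt_of_le hc₀ (hrbound U).1
  have hrne : ∀ U, r U ≠ 0 := fun U => (hrpos U).ne'
  have h2rne : ∀ U, 2 * r U ≠ 0 := fun U => mul_ne_zero two_ne_zero (hrne U)
  set a : ℝ → ℝ := fun U => G U / (2 * r U) with ha_def
  set b : ℝ → ℝ := fun U => 1 / (2 * r U) with hb_def
  have ha2 : ContDiff ℝ 2 a := hG.div (contDiff_const.mul hr) fun U => h2rne U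
  have hb2 : ContDiff ℝ 2 b := contDiff_const.div (contDiff_const.mul hr) fun U => h2rne U
  set A : ℝ → ℝ := fun U => ∫ s in (0:ℝ)..U, a s with hA_def
  have hA_deriv : ∀ U, HasDerivAt A (a U) U :=
    fun U => (ha2.continuous.integral_hasStrictDerivAt 0 U).hasDerivAt
  have hA3 : ContDiff ℝ 3 A := by
    rw [show (3 : WithTop ℕ∞) = 2 + 1 from by norm_num, contDiff_succ_iff_deriv]
    refine ⟨fun U => (hA_deriv U).differentiableAt, by simp, ?_⟩
    have : deriv A = a := funext fun U => (hA_deriv U).deriv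
    rw [this]; exact ha2
  have hA0 : A 0 = 0 := intervalIntegral.integral_same
  set g : ℝ → ℝ := fun s => Real.exp (-(A s)) * b s with hg_def
  have hg2 : ContDiff ℝ 2 g := ((hA3.of_le (by norm_num)).neg.exp).mul hb2
  set B : ℝ → ℝ := fun U => ∫ s in (0:ℝ)..U, g s with hB_def
  have hB_deriv : ∀ U, HasDerivAt B (g U) U :=
    fun U => (hg2.continuous.integral_hasStrictDerivAt 0 U).hasDerivAt
  have hB3 : ContDiff ℝ 3 B := by
    rw [show (3 : WithTop ℕ∞) = 2 + 1 from by norm_num, contDiff_succ_iff_deriv]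
    refine ⟨fun U => (hB_deriv U).differentiableAt, by simp, ?_⟩
    have : deriv B = g := funext fun U => (hB_deriv U).deriv
    rw [this]; exact hg2
  have hB0 : B 0 = 0 := intervalIntegral.integral_same
  set tCH : ℝ → ℝ := fun U => Real.exp (A U) * (T + B U) with htCH_def
  have htCH3 : ContDiff ℝ 3 tCH := (hA3.exp).mul (contDiff_const.add hB3)
  have htCH0 : tCH 0 = T := by simp [htCH_def, hA0, hB0]
  have htCH_deriv : ∀ U, HasDerivAt tCH (a U * tCH U + b U) U := by
    intro U
    have h1 : HasDerivAt (fun U => Real.exp (A U)) (Real.exp (A U) * a U) U := (hA_deriv U).exp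
    have h2 : HasDerivAt (fun U => T + B U) (g U) U := (hB_deriv U).const_add T
    have h3 := h1.fun_mul h2
    refine h3.congr_deriv ?_
    simp only [htCH_def, hg_def, Real.exp_neg]
    field_simp [Real.exp_ne_zero]
  have hab : ∀ t U, a U * t + b U = (1/2) * ((1 + t * G U) / r U) := by
    intro t U
    simp only [ha_def, hb_def]
    field_simp
    ring
  set f : ℝ → ℝ := fun U => 1 + tCH U * G U with hf_def
  have hf2 : ContDiff ℝ 2 f := contDiff_const.add ((htCH3.of_le (by norm_num)).mul hG)
  have hf0 : f 0 = 0 := by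
    simp only [hf_def, htCH0, hG0, hδ]
    field_simp
    norm_num
  have hG'diff : Differentiable ℝ (deriv G) := by
    have := (contDiff_succ_iff_deriv.mp (show ContDiff ℝ (1+1) G by exact_mod_cast hG)).2.2
    exact this.differentiable one_ne_zero
  have hf_deriv : ∀ U, HasDerivAt f (a U * f U + tCH U * deriv G U) U := by
    intro U
    have h1 := ((htCH_deriv U).fun_mul ((hG.differentiable (by norm_num) U).hasDerivAt)).const_add 1
    refine h1.congr_deriv ?_
    simp only [hf_def, ha_def, hb_def]
    field_simp
    ring
  have hf'0 : deriv f 0 = 0 := by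
    rw [(hf_deriv 0).deriv, hf0, htCH0, hG1]
    ring
  have hDf : deriv f = fun U => a U * f U + tCH U * deriv G U :=
    funext fun U => (hf_deriv U).deriv
  have hadiff : Differentiable ℝ a := ha2.differentiable (by norm_num)
  have hfdiff : Differentiable ℝ f := hf2.differentiable (by norm_num)
  have htdiff : Differentiable ℝ tCH := htCH3.differentiable (by norm_num)
  have hf''0 : deriv (deriv f) 0 = T * iteratedDeriv 2 G 0 := by
    rw [hDf]
    rw [deriv_fun_add ((hadiff 0).fun_mul (hfdiff 0)) ((htdiff 0).fun_mul (hG'diff 0)),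
      deriv_fun_mul (hadiff 0) (hfdiff 0), deriv_fun_mul (htdiff 0) (hG'diff 0),
      hf0, hf'0, hG1, htCH0]
    have : iteratedDeriv 2 G 0 = deriv (deriv G) 0 := by
      rw [iteratedDeriv_succ, iteratedDeriv_one]
    rw [this]
    ring
  set K : ℝ := T * iteratedDeriv 2 G 0 with hK_def
  have hK : 0 < K := mul_pos hT hG2
  have hf'diff : Differentiable ℝ (deriv f) := by
    have := (contDiff_succ_iff_deriv.mp (show ContDiff ℝ (1+1) f by exact_mod_cast hf2)).2.2
    exact this.differentiable one_ne_zero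
  have hf''cont : Continuous (deriv (deriv f)) := by
    have h1 := (contDiff_succ_iff_deriv.mp (show ContDiff ℝ (1+1) f by exact_mod_cast hf2)).2.2
    exact (contDiff_one_iff_deriv.mp h1).2
  -- choose U₀ by continuity of f'' at 0
  obtain ⟨ε, hε, hball⟩ := Metric.continuousAt_iff.mp (hf''cont.continuousAt) (K/2) (by positivity)
  set U₀ : ℝ := ε/2 with hU₀_def
  have hU₀ : 0 < U₀ := by positivity
  have hf''bnd : ∀ τ ∈ Set.Icc (0:ℝ) U₀, K/2 ≤ deriv (deriv f) τ ∧ deriv (deriv f) τ ≤ 3*K/2 := by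
    intro τ hτ
    have : dist τ 0 < ε := by
      rw [Real.dist_eq, sub_zero, abs_of_nonneg hτ.1]
      have := hτ.2
      simp only [hU₀_def] at this
      linarith
    have h2 := hball this
    rw [Real.dist_eq, hf''0, abs_lt] at h2
    constructor <;> linarith [h2.1, h2.2]
  clear_value a b A g B tCH f K U₀
  -- derivative of tCH expressed via f
  have hDt : ∀ x, deriv tCH x = f x / (2 * r x) := by
    intro x
    rw [(htCH_deriv x).deriv]
    simp only [ha_def, hb_def, hf_def]
    field_simp
    ring
  have hpoly1 : ∀ (c x : ℝ), deriv (fun x : ℝ => c * x) x = c := fun c x => by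
    rw [deriv_const_mul_field]; simp
  have hpoly2 : ∀ (c x : ℝ), deriv (fun x : ℝ => c * x ^ 2) x = c * (2 * x) := fun c x => by
    simp [deriv_const_mul_field]
  have hpoly3 : ∀ (c T' x : ℝ), deriv (fun x : ℝ => T' + c * x ^ 3) x = c * (3 * x ^ 2) := by
    intro c T' x; rw [deriv_const_add]; simp [deriv_const_mul_field]
  have hIoo : ∀ x : ℝ, x ∈ Set.Ioo (0:ℝ) U₀ → x ∈ Set.Icc (0:ℝ) U₀ :=
    fun x hx => ⟨hx.1.le, hx.2.le⟩
  have h1low : ∀ x ∈ Set.Icc (0:ℝ) U₀, K/2 * x ≤ deriv f x := by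
    apply aux_cmp (by fun_prop) hf'diff (by simp [hf'0])
    intro x hx
    rw [hpoly1]
    exact (hf''bnd x (hIoo x hx)).1
  have h1up : ∀ x ∈ Set.Icc (0:ℝ) U₀, deriv f x ≤ 3*K/2 * x := by
    apply aux_cmp hf'diff (by fun_prop) (by simp [hf'0])
    intro x hx
    rw [hpoly1]
    exact (hf''bnd x (hIoo x hx)).2
  have h2low : ∀ x ∈ Set.Icc (0:ℝ) U₀, K/4 * x ^ 2 ≤ f x := by
    apply aux_cmp (by fun_prop) hfdiff (by simp [hf0])
    intro x hx
    rw [hpoly2]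
    have h := h1low x (hIoo x hx)
    have e : K/4 * (2*x) = K/2 * x := by ring
    rw [e]; exact h
  have h2up : ∀ x ∈ Set.Icc (0:ℝ) U₀, f x ≤ 3*K/4 * x ^ 2 := by
    apply aux_cmp hfdiff (by fun_prop) (by simp [hf0])
    intro x hx
    rw [hpoly2]
    have h := h1up x (hIoo x hx)
    have e : 3*K/4 * (2*x) = 3*K/2 * x := by ring
    rw [e]; exact h
  have hfnn : ∀ x ∈ Set.Icc (0:ℝ) U₀, 0 ≤ f x := by
    intro x hx
    have h2 := h2low x hx
    have h3 : 0 ≤ K/4 * x ^ 2 := by positivity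
    linarith
  have hone : ∀ x : ℝ, (1:ℝ) ≤ c₀⁻¹ * r x := by
    intro x
    rw [← div_eq_inv_mul, le_div_iff₀ hc₀]
    simpa using (hrbound x).1
  have h3low : ∀ x ∈ Set.Icc (0:ℝ) U₀, T + K/24 * x ^ 3 ≤ tCH x := by
    apply aux_cmp (by fun_prop) htdiff (by simp [htCH0])
    intro x hx
    rw [hpoly3, hDt]
    rw [le_div_iff₀ (mul_pos two_pos (hrpos x))]
    have hf1 := h2low x (hIoo x hx)
    have hr1 := (hrbound x).2
    nlinarith [mul_nonneg (mul_nonneg hK.le (sq_nonneg x)) (sub_nonneg.mpr hr1), sq_nonneg x, hK.le]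
  have h3up : ∀ x ∈ Set.Icc (0:ℝ) U₀, tCH x ≤ T + (K/8 * c₀⁻¹) * x ^ 3 := by
    apply aux_cmp htdiff (by fun_prop) (by simp [htCH0])
    intro x hx
    rw [hpoly3, hDt]
    rw [div_le_iff₀ (mul_pos two_pos (hrpos x))]
    have hf1 := h2up x (hIoo x hx)
    have h2 := hone x
    nlinarith [mul_nonneg (mul_nonneg hK.le (sq_nonneg x)) (sub_nonneg.mpr h2), sq_nonneg x, hK.le]
  have hμval : ∀ x, μ (tCH x) x = f x / r x := by
    intro x
    rw [hμ]
    simp only [hf_def]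
  have h4low : ∀ x ∈ Set.Icc (0:ℝ) U₀, K/4 * x ^ 2 ≤ μ (tCH x) x := by
    intro x hx
    rw [hμval, le_div_iff₀ (hrpos x)]
    have hf1 := h2low x hx
    have hr1 := (hrbound x).2
    nlinarith [mul_nonneg (mul_nonneg hK.le (sq_nonneg x)) (sub_nonneg.mpr hr1)]
  have h4up : ∀ x ∈ Set.Icc (0:ℝ) U₀, μ (tCH x) x ≤ 3*K/4 * c₀⁻¹ * x ^ 2 := by
    intro x hx
    rw [hμval, div_le_iff₀ (hrpos x)]
    have hf1 := h2up x hx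
    have h2 := hone x
    nlinarith [mul_nonneg (mul_nonneg hK.le (sq_nonneg x)) (sub_nonneg.mpr h2), sq_nonneg x, hK.le]
  -- uniqueness
  have huniq : ∀ s : ℝ → ℝ, s 0 = T →
      (∀ U ∈ Set.Icc (0 : ℝ) U₀, HasDerivWithinAt s ((1 / 2) * μ (s U) U) (Set.Icc 0 U₀) U) →
      ∀ U ∈ Set.Icc (0 : ℝ) U₀, s U = tCH U := by
    intro s hs0 hsd U hU
    have hder : ∀ x ∈ Set.Icc (0:ℝ) U₀,
        HasDerivWithinAt (fun y => Real.exp (-(A y)) * (s y - tCH y)) 0 (Set.Icc 0 U₀) x := by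
      intro x hx
      have h1 : HasDerivWithinAt (fun y => Real.exp (-(A y))) (Real.exp (-(A x)) * (-(a x)))
          (Set.Icc 0 U₀) x := (((hA_deriv x).neg).exp).hasDerivWithinAt
      have h2 : HasDerivWithinAt s (a x * s x + b x) (Set.Icc 0 U₀) x := by
        have h := hsd x hx
        rwa [hμ, ← hab] at h
      have h3 : HasDerivWithinAt tCH (a x * tCH x + b x) (Set.Icc 0 U₀) x :=
        (htCH_deriv x).hasDerivWithinAt
      have h4 := h1.fun_mul (h2.fun_sub h3)
      refine h4.congr_deriv ?_
      ring
    have hlip := Convex.norm_image_sub_le_of_norm_hasDerivWithin_le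
      (C := 0) (f' := fun _ => (0:ℝ)) hder (fun x _ => by simp) (convex_Icc _ _)
      (Set.left_mem_Icc.mpr hU₀.le) hU
    simp only [zero_mul] at hlip
    have hz : Real.exp (-(A U)) * (s U - tCH U)
        - Real.exp (-(A 0)) * (s 0 - tCH 0) = 0 := by
      have hnn := norm_nonneg (Real.exp (-(A U)) * (s U - tCH U)
        - Real.exp (-(A 0)) * (s 0 - tCH 0))
      exact norm_eq_zero.mp (le_antisymm hlip hnn)
    have hz2 : Real.exp (-(A U)) * (s U - tCH U) = 0 := by
      rw [hs0, htCH0, sub_self, mul_zero, sub_zero] at hz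
      exact hz
    rcases mul_eq_zero.mp hz2 with h' | h'
    · exact absurd h' (Real.exp_ne_zero _)
    · linarith
  -- derivatives at 0
  have hrdiff : Differentiable ℝ r := hr.differentiable (by norm_num)
  have hr'diff : Differentiable ℝ (deriv r) := by
    have := (contDiff_succ_iff_deriv.mp (show ContDiff ℝ (1+1) r by exact_mod_cast hr)).2.2
    exact this.differentiable one_ne_zero
  have hDtf : deriv tCH = fun x => f x / (2 * r x) := funext hDt
  have hd2r : Differentiable ℝ (fun x : ℝ => 2 * r x) := hrdiff.const_mul 2
  have hd2r' : Differentiable ℝ (fun x : ℝ => 2 * deriv r x) := hr'diff.const_mul 2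
  have d1 : deriv tCH 0 = 0 := by rw [hDt 0, hf0, zero_div]
  have hDDt : deriv (deriv tCH)
      = fun x => (deriv f x * (2 * r x) - f x * (2 * deriv r x)) / (2 * r x) ^ 2 := by
    funext x
    rw [hDtf, deriv_fun_div (hfdiff.differentiableAt) (hd2r.differentiableAt) (h2rne x)]
    congr 2
    rw [deriv_const_mul 2 (hrdiff.differentiableAt)]
  have d2 : deriv (deriv tCH) 0 = 0 := by
    rw [hDDt]
    simp [hf0, hf'0]
  have hNdiff : Differentiable ℝ
      (fun x => deriv f x * (2 * r x) - f x * (2 * deriv r x)) :=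
    (hf'diff.mul hd2r).sub (hfdiff.mul hd2r')
  have hDdiff : Differentiable ℝ (fun x : ℝ => (2 * r x) ^ 2) := hd2r.pow 2
  have hN0 : deriv f 0 * (2 * r 0) - f 0 * (2 * deriv r 0) = 0 := by
    rw [hf0, hf'0]; ring
  have hN'0 : deriv (fun x => deriv f x * (2 * r x) - f x * (2 * deriv r x)) 0
      = K * (2 * r 0) := by
    rw [deriv_fun_sub ((hf'diff 0).fun_mul (hd2r 0)) ((hfdiff 0).fun_mul (hd2r' 0)),
      deriv_fun_mul (hf'diff 0) (hd2r 0), deriv_fun_mul (hfdiff 0) (hd2r' 0),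
      hf0, hf'0, hf''0]
    ring
  have d3 : deriv (deriv (deriv tCH)) 0 = K / (2 * r 0) := by
    rw [hDDt, deriv_fun_div (hNdiff 0) (hDdiff 0) (pow_ne_zero 2 (h2rne 0)), hN'0, hN0]
    rw [zero_mul, sub_zero]
    field_simp [hrne 0]
  -- convert to iteratedDerivWithin
  have hUD : UniqueDiffOn ℝ (Set.Icc (0:ℝ) U₀) := uniqueDiffOn_Icc hU₀
  have h0mem : (0:ℝ) ∈ Set.Icc (0:ℝ) U₀ := Set.left_mem_Icc.mpr hU₀.le
  have e1 : iteratedDerivWithin 1 tCH (Set.Icc 0 U₀) 0 = 0 := by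
    rw [aux_idw hUD (htCH3.of_le (by norm_num)) 0 h0mem, iteratedDeriv_one, d1]
  have e2 : iteratedDerivWithin 2 tCH (Set.Icc 0 U₀) 0 = 0 := by
    rw [aux_idw hUD (htCH3.of_le (by norm_num)) 0 h0mem, iteratedDeriv_succ,
      iteratedDeriv_one, d2]
  have e3 : 0 < iteratedDerivWithin 3 tCH (Set.Icc 0 U₀) 0 := by
    rw [aux_idw hUD (htCH3.of_le (by norm_num)) 0 h0mem, iteratedDeriv_succ,
      iteratedDeriv_succ, iteratedDeriv_one, d3]
    exact div_pos hK (mul_pos two_pos (hrpos 0))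
  -- assemble
  refine ⟨U₀, hU₀, tCH, htCH3.contDiffOn, htCH0, ?_, huniq, ?_, e1, e2, e3⟩
  · intro U hU
    have h := (htCH_deriv U).hasDerivWithinAt (s := Set.Icc (0:ℝ) U₀)
    rwa [hab, ← hμ] at h
  · refine ⟨K/24, 3*K/4 * c₀⁻¹, by positivity, ?_, ?_⟩
    · have hc1 : c₀ ≤ 1 := le_trans (hrbound 0).1 (hrbound 0).2
      have h1 : (1:ℝ) ≤ c₀⁻¹ := by
        rw [le_inv_comm₀] <;> simp [hc₀, hc1]
      nlinarith [hK.le]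
    · intro U hU
      have hx3 : 0 ≤ U ^ 3 := pow_nonneg hU.1 3
      have hx2 : 0 ≤ U ^ 2 := sq_nonneg U
      refine ⟨h3low U hU, ?_, ?_, h4up U hU⟩
      · have := h3up U hU
        have h1 : (1:ℝ) ≤ c₀⁻¹ := by
          have hc1 : c₀ ≤ 1 := le_trans (hrbound 0).1 (hrbound 0).2
          rw [le_inv_comm₀] <;> simp [hc₀, hc1]
        nlinarith [mul_nonneg (mul_nonneg hK.le (inv_nonneg.mpr hc₀.le)) hx3]
      · have := h4low U hU
        nlinarith [mul_nonneg hK.le hx2]
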